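/- Let D ≥ 1 be an integer and let Y = Σ_{k=1}^D Z_k² where Z_1,…,Z_D are i.i.d. standard real Gaussian random variables (so Y has the chi-squared distribution with D degrees of freedom). Then for every x > 0, P(Y − D ≤ −2√(Dx)) ≤ e^{−x} and P(Y − D ≥ 2√(Dx) + 2x) ≤ e^{−x}. As a consequence, for every y > 0, P(D^{−1/2}|Y − D| ≥ y) ≤ 2·exp(−(1/8)·y·min(y, √D)). -/

import Mathlib

open MeasureTheory ProbabilityTheory Real

lemma log_quad_lower {u : ℝ} (hu : 0 ≤ u) : u - u ^ 2 / 2 ≤ Real.log (1 + u) := by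
  set f : ℝ → ℝ := fun w => Real.log (1 + w) - w + w ^ 2 / 2 with hf
  have hder : ∀ v : ℝ, 0 < v → HasDerivAt f (1 / (1 + v) - 1 + 2 * v ^ 1 / 2) v := by
    intro v hv
    have h1 : HasDerivAt (fun w : ℝ => 1 + w) 1 v := (hasDerivAt_id v).const_add 1
    have hlog : HasDerivAt (fun w : ℝ => Real.log (1 + w)) (1 / (1 + v)) v :=
      h1.log (by linarith)
    exact (hlog.sub (hasDerivAt_id v)).add ((hasDerivAt_pow 2 v).div_const 2)
  have hmono : MonotoneOn f (Set.Ici (0 : ℝ)) := by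
    apply monotoneOn_of_deriv_nonneg (convex_Ici 0)
    · apply ContinuousOn.add
      · apply ContinuousOn.sub
        · apply ContinuousOn.log (continuousOn_const.add continuousOn_id)
          intro x hx
          simp only [Set.mem_Ici] at hx; intro h; simp only [Pi.add_apply, id_eq] at h; linarith
        · exact continuousOn_id
      · exact (continuousOn_pow 2).div_const 2
    · intro v hv
      rw [interior_Ici] at hv
      exact ((hder v hv).differentiableAt).differentiableWithinAt
    · intro v hv
      rw [interior_Ici, Set.mem_Ioi] at hv
      rw [(hder v hv).deriv]
      have h1v : (0:ℝ) < 1 + v := by linarith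
      have : 1 / (1 + v) - 1 + 2 * v ^ 1 / 2 = v ^ 2 / (1 + v) := by
        field_simp; ring
      rw [this]; positivity
  have h0 : f 0 ≤ f u := hmono (by simp) (by simpa using hu) hu
  simp only [hf, add_zero, Real.log_one] at h0
  norm_num at h0
  linarith

lemma log_quad_upper {v : ℝ} (hv : 0 ≤ v) :
    Real.log (1 + v) ≤ (2 * v + v ^ 2) / (2 * (1 + v)) := by
  set g : ℝ → ℝ := fun w => (2 * w + w ^ 2) / (2 * (1 + w)) - Real.log (1 + w) with hg
  have hder : ∀ w : ℝ, 0 < w → HasDerivAt g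
      (((2 + 2 * w ^ 1) * (2 * (1 + w)) - (2 * w + w ^ 2) * 2) / (2 * (1 + w)) ^ 2
        - 1 / (1 + w)) w := by
    intro w hw
    have h1w : (0:ℝ) < 1 + w := by linarith
    have h1 : HasDerivAt (fun u : ℝ => 1 + u) 1 w := (hasDerivAt_id w).const_add 1
    have hnum : HasDerivAt (fun u : ℝ => 2 * u + u ^ 2) (2 + 2 * w ^ 1) w := by
      have := ((hasDerivAt_id w).const_mul 2).add (hasDerivAt_pow 2 w)
      exact this.congr_deriv (by norm_num)
    have hden : HasDerivAt (fun u : ℝ => 2 * (1 + u)) 2 w := by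
      simpa using h1.const_mul 2
    have hq := hnum.div hden (by positivity)
    have hlog : HasDerivAt (fun u : ℝ => Real.log (1 + u)) (1 / (1 + w)) w :=
      h1.log (by linarith)
    exact hq.sub hlog
  have hmono : MonotoneOn g (Set.Ici (0 : ℝ)) := by
    apply monotoneOn_of_deriv_nonneg (convex_Ici 0)
    · apply ContinuousOn.sub
      · apply ContinuousOn.div
        · fun_prop
        · fun_prop
        · intro x hx; simp only [Set.mem_Ici] at hx; positivity
      · apply ContinuousOn.log (continuousOn_const.add continuousOn_id)
        intro x hx
        simp only [Set.mem_Ici] at hx; intro h; simp only [Pi.add_apply, id_eq] at h; linarith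
    · intro w hw
      rw [interior_Ici] at hw
      exact ((hder w hw).differentiableAt).differentiableWithinAt
    · intro w hw
      rw [interior_Ici, Set.mem_Ioi] at hw
      rw [(hder w hw).deriv]
      have h1w : (0:ℝ) < 1 + w := by linarith
      have : ((2 + 2 * w ^ 1) * (2 * (1 + w)) - (2 * w + w ^ 2) * 2) / (2 * (1 + w)) ^ 2
          - 1 / (1 + w) = w ^ 2 / (2 * (1 + w) ^ 2) := by
        field_simp; ring
      rw [this]; positivity
  have h0 : g 0 ≤ g v := hmono (by simp) (by simpa using hv) hv
  simp only [hg, add_zero, Real.log_one] at h0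
  norm_num at h0
  linarith

lemma gaussianReal_eq_wd :
    gaussianReal 0 1 = MeasureTheory.Measure.withDensity MeasureTheory.volume
      (fun x => ((gaussianPDFReal 0 1 x).toNNReal : ENNReal)) := by
  rw [gaussianReal_of_var_ne_zero 0 one_ne_zero]; rfl

lemma pdf_eq (x : ℝ) :
    gaussianPDFReal 0 1 x = (Real.sqrt (2 * π))⁻¹ * Real.exp (-x ^ 2 / 2) := by
  rw [gaussianPDFReal]
  push_cast
  norm_num

lemma pdf_smul (t : ℝ) (x : ℝ) :
    ((gaussianPDFReal 0 1 x).toNNReal : NNReal) • Real.exp (t * x ^ 2)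
      = (Real.sqrt (2 * π))⁻¹ * Real.exp (-(1/2 - t) * x ^ 2) := by
  rw [NNReal.smul_def, smul_eq_mul, Real.coe_toNNReal _ (gaussianPDFReal_nonneg 0 1 x),
    pdf_eq, mul_assoc, ← Real.exp_add]
  congr 2
  ring

lemma integrable_exp_sq_gauss {t : ℝ} (ht : t < 1/2) :
    Integrable (fun x => Real.exp (t * x ^ 2)) (gaussianReal 0 1) := by
  have hb : (0:ℝ) < 1/2 - t := by linarith
  rw [gaussianReal_eq_wd,
    integrable_withDensity_iff_integrable_smul (measurable_gaussianPDFReal 0 1).real_toNNReal]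
  have : (fun x : ℝ => ((gaussianPDFReal 0 1 x).toNNReal : NNReal) • Real.exp (t * x ^ 2))
      = fun x => (Real.sqrt (2 * π))⁻¹ * Real.exp (-(1/2 - t) * x ^ 2) := by
    funext x; exact pdf_smul t x
  rw [this]
  exact (integrable_exp_neg_mul_sq hb).const_mul _

lemma integral_exp_sq_gauss {t : ℝ} (ht : t < 1/2) :
    ∫ x, Real.exp (t * x ^ 2) ∂(gaussianReal 0 1) = 1 / Real.sqrt (1 - 2 * t) := by
  have hb : (0:ℝ) < 1/2 - t := by linarith
  rw [gaussianReal_eq_wd,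
    integral_withDensity_eq_integral_smul (measurable_gaussianPDFReal 0 1).real_toNNReal]
  have : (fun x : ℝ => ((gaussianPDFReal 0 1 x).toNNReal : NNReal) • Real.exp (t * x ^ 2))
      = fun x => (Real.sqrt (2 * π))⁻¹ * Real.exp (-(1/2 - t) * x ^ 2) := by
    funext x; exact pdf_smul t x
  rw [this, integral_const_mul, integral_gaussian]
  rw [Real.sqrt_div' π (by linarith : (0:ℝ) ≤ 1/2 - t)]
  have h2 : (1:ℝ) - 2 * t = 2 * (1/2 - t) := by ring
  rw [h2, Real.sqrt_mul (by norm_num : (0:ℝ) ≤ 2) π,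
    Real.sqrt_mul (by norm_num : (0:ℝ) ≤ 2) (1/2 - t)]
  have hπ : (0:ℝ) < Real.sqrt π := Real.sqrt_pos.mpr Real.pi_pos
  have hsb : (0:ℝ) < Real.sqrt (1/2 - t) := Real.sqrt_pos.mpr hb
  have h2' : (0:ℝ) < Real.sqrt 2 := by positivity
  field_simp

open MeasureTheory ProbabilityTheory


/-- **Lemma 1 (Laurent–Massart chi-squared concentration).** If `Y = Σ_{k=1}^D Z_k²`
with `Z_1,…,Z_D` i.i.d. standard Gaussians, then for every `x > 0`,
`P(Y − D ≤ −2√(Dx)) ≤ e^{−x}` and `P(Y − D ≥ 2√(Dx) + 2x) ≤ e^{−x}`; consequently,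
for every `y > 0`, `P(D^{−1/2}|Y − D| ≥ y) ≤ 2 exp(−(1/8) y min(y, √D))`. -/
theorem chi_squared_concentration {Ω : Type*} [MeasurableSpace Ω]
    (P : Measure Ω) [IsProbabilityMeasure P]
    (D : ℕ) (hD : 1 ≤ D) (Z : Fin D → Ω → ℝ)
    (hmeas : ∀ k, Measurable (Z k))
    (hlaw : ∀ k, P.map (Z k) = gaussianReal 0 1)
    (hindep : iIndepFun Z P) :
    (∀ x : ℝ, 0 < x →
      P {ω | ∑ k, Z k ω ^ 2 - D ≤ -(2 * Real.sqrt (D * x))} ≤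
          ENNReal.ofReal (Real.exp (-x)) ∧
      P {ω | 2 * Real.sqrt (D * x) + 2 * x ≤ ∑ k, Z k ω ^ 2 - D} ≤
          ENNReal.ofReal (Real.exp (-x))) ∧
    ∀ y : ℝ, 0 < y →
      P {ω | y ≤ |∑ k, Z k ω ^ 2 - D| / Real.sqrt D} ≤
        ENNReal.ofReal (2 * Real.exp (-(1/8) * y * min y (Real.sqrt D))) := by
  classical
  have hDpos : (0:ℝ) < D := by exact_mod_cast hD
  set X : Fin D → Ω → ℝ := fun k ω => Z k ω ^ 2 with hX
  have hXmeas : ∀ k, Measurable (X k) := fun k => (hmeas k).pow_const 2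
  have hXindep : iIndepFun X P :=
    hindep.comp (fun _ (x : ℝ) => x ^ 2) (fun _ => measurable_id.pow_const 2)
  have hgmeas : ∀ t : ℝ, Measurable fun x : ℝ => Real.exp (t * x ^ 2) := by
    intro t; fun_prop
  have hXint : ∀ t : ℝ, t < 1/2 → ∀ k, Integrable (fun ω => Real.exp (t * X k ω)) P := by
    intro t ht k
    have h := integrable_exp_sq_gauss ht
    rw [← hlaw k,
      integrable_map_measure (hgmeas t).aestronglyMeasurable (hmeas k).aemeasurable] at h
    exact h
  have hSint : ∀ t : ℝ, t < 1/2 → Integrable (fun ω => Real.exp (t * (∑ k, X k) ω)) P :=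
    fun t ht => hXindep.integrable_exp_mul_sum hXmeas (fun k _ => hXint t ht k)
  have hmgf : ∀ t : ℝ, t < 1/2 → mgf (∑ k, X k) P t = (1 / Real.sqrt (1 - 2*t)) ^ D := by
    intro t ht
    rw [hXindep.mgf_sum hXmeas Finset.univ]
    have hk : ∀ k, mgf (X k) P t = 1 / Real.sqrt (1 - 2*t) := by
      intro k
      unfold mgf
      rw [show (∫ ω, Real.exp (t * X k ω) ∂P) = ∫ x, Real.exp (t * x ^ 2) ∂(P.map (Z k)) from
        (integral_map (hmeas k).aemeasurable (hgmeas t).aestronglyMeasurable).symm,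
        hlaw k, integral_exp_sq_gauss ht]
    simp only [hk, Finset.prod_const, Finset.card_univ, Fintype.card_fin]
  have key : ∀ x : ℝ, 0 < x →
      P {ω | ∑ k, Z k ω ^ 2 - D ≤ -(2 * Real.sqrt (D * x))} ≤
          ENNReal.ofReal (Real.exp (-x)) ∧
      P {ω | 2 * Real.sqrt (D * x) + 2 * x ≤ ∑ k, Z k ω ^ 2 - D} ≤
          ENNReal.ofReal (Real.exp (-x)) := by
    intro x hx
    set s : ℝ := Real.sqrt (x / D) with hs
    have hspos : 0 < s := Real.sqrt_pos.mpr (by positivity)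
    have hxs : x = D * s ^ 2 := by
      rw [hs, Real.sq_sqrt (by positivity : (0:ℝ) ≤ x / D)]
      field_simp
    have hsqrtDx : Real.sqrt ((D:ℝ) * x) = D * s := by
      rw [show (D:ℝ) * x = ((D:ℝ) * s) ^ 2 from by rw [hxs]; ring,
        Real.sqrt_sq (by positivity)]
    have h12 : (0:ℝ) < 1 + 2 * s := by linarith
    have hsq12 : (0:ℝ) < Real.sqrt (1 + 2 * s) := Real.sqrt_pos.mpr h12
    constructor
    · -- lower tail
      have hset : {ω | ∑ k, Z k ω ^ 2 - D ≤ -(2 * Real.sqrt (D * x))}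
          = {ω | (∑ k, X k) ω ≤ (D:ℝ) - 2 * ((D:ℝ) * s)} := by
        ext ω
        simp only [Set.mem_setOf_eq, Finset.sum_apply, hX, hsqrtDx]
        constructor <;> intro h <;> linarith
      rw [hset]
      have hch := measure_le_le_exp_mul_mgf (μ := P) (X := ∑ k, X k) (t := -s)
        ((D:ℝ) - 2 * ((D:ℝ) * s)) (by linarith) (hSint (-s) (by linarith))
      rw [hmgf (-s) (by linarith)] at hch
      have hkey : Real.exp (s - s ^ 2) ≤ Real.sqrt (1 + 2 * s) := by
        have hl := log_quad_lower (u := 2 * s) (by positivity)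
        have h2 : Real.exp (2 * s - (2 * s) ^ 2 / 2) ≤ 1 + 2 * s :=
          (Real.exp_le_exp.mpr hl).trans_eq (Real.exp_log h12)
        have h3 : Real.exp (2 * s - (2 * s) ^ 2 / 2) = Real.exp (s - s ^ 2) ^ 2 := by
          rw [← Real.exp_nat_mul]; congr 1; push_cast; ring
        calc Real.exp (s - s ^ 2) = Real.sqrt (Real.exp (s - s ^ 2) ^ 2) :=
              (Real.sqrt_sq (Real.exp_pos _).le).symm
          _ ≤ Real.sqrt (1 + 2 * s) := Real.sqrt_le_sqrt (by rw [← h3]; exact h2)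
      have hpow : Real.exp (s - s ^ 2) ^ D ≤ Real.sqrt (1 + 2 * s) ^ D :=
        pow_le_pow_left₀ (Real.exp_pos _).le hkey D
      have hbound : Real.exp (-(-s) * ((D:ℝ) - 2 * ((D:ℝ) * s)))
          * (1 / Real.sqrt (1 - 2 * (-s))) ^ D ≤ Real.exp (-x) := by
        rw [show (1:ℝ) - 2 * (-s) = 1 + 2 * s from by ring, hxs,
          div_pow, one_pow, mul_one_div, div_le_iff₀ (by positivity)]
        calc Real.exp (-(-s) * ((D:ℝ) - 2 * ((D:ℝ) * s)))
            = Real.exp (-((D:ℝ) * s ^ 2)) * Real.exp (s - s ^ 2) ^ D := by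
              rw [← Real.exp_nat_mul, ← Real.exp_add]; congr 1; ring
          _ ≤ Real.exp (-((D:ℝ) * s ^ 2)) * Real.sqrt (1 + 2 * s) ^ D :=
              mul_le_mul_of_nonneg_left hpow (Real.exp_pos _).le
      calc P {ω | (∑ k, X k) ω ≤ (D:ℝ) - 2 * ((D:ℝ) * s)}
          = ENNReal.ofReal (P {ω | (∑ k, X k) ω ≤ (D:ℝ) - 2 * ((D:ℝ) * s)}).toReal :=
            (ENNReal.ofReal_toReal (measure_ne_top P _)).symm
        _ ≤ ENNReal.ofReal (Real.exp (-x)) :=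
            ENNReal.ofReal_le_ofReal (hch.trans hbound)
    · -- upper tail
      set t : ℝ := s / (1 + 2 * s) with htdef
      have ht0 : 0 ≤ t := by positivity
      have ht2 : t < 1/2 := by
        rw [htdef, div_lt_iff₀ h12]; nlinarith
      have h1mt : 1 - 2 * t = (1 + 2 * s)⁻¹ := by
        rw [htdef]; field_simp; ring
      have hset : {ω | 2 * Real.sqrt (D * x) + 2 * x ≤ ∑ k, Z k ω ^ 2 - D}
          = {ω | (D:ℝ) + 2 * ((D:ℝ) * s) + 2 * ((D:ℝ) * s ^ 2) ≤ (∑ k, X k) ω} := by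
        ext ω
        simp only [Set.mem_setOf_eq, Finset.sum_apply, hX, hsqrtDx]
        rw [hxs]
        constructor <;> intro h <;> linarith
      rw [hset]
      have hch := measure_ge_le_exp_mul_mgf (μ := P) (X := ∑ k, X k) (t := t)
        ((D:ℝ) + 2 * ((D:ℝ) * s) + 2 * ((D:ℝ) * s ^ 2)) ht0 (hSint t ht2)
      rw [hmgf t ht2, h1mt, Real.sqrt_inv, one_div, inv_inv] at hch
      have hkey : Real.sqrt (1 + 2 * s) ≤ Real.exp (s * (1 + s) / (1 + 2 * s)) := by
        have hu := log_quad_upper (v := 2 * s) (by positivity)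
        have hlog : Real.log (1 + 2 * s) / 2 ≤ s * (1 + s) / (1 + 2 * s) := by
          have heq : (2 * (2 * s) + (2 * s) ^ 2) / (2 * (1 + 2 * s)) / 2
              = s * (1 + s) / (1 + 2 * s) := by field_simp
          calc Real.log (1 + 2 * s) / 2
              ≤ (2 * (2 * s) + (2 * s) ^ 2) / (2 * (1 + 2 * s)) / 2 := by linarith
            _ = s * (1 + s) / (1 + 2 * s) := heq
        calc Real.sqrt (1 + 2 * s) = Real.exp (Real.log (1 + 2 * s) / 2) := by
              rw [← Real.log_sqrt h12.le, Real.exp_log hsq12]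
          _ ≤ Real.exp (s * (1 + s) / (1 + 2 * s)) := Real.exp_le_exp.mpr hlog
      have hpow : Real.sqrt (1 + 2 * s) ^ D ≤ Real.exp (s * (1 + s) / (1 + 2 * s)) ^ D :=
        pow_le_pow_left₀ hsq12.le hkey D
      have hbound : Real.exp (-t * ((D:ℝ) + 2 * ((D:ℝ) * s) + 2 * ((D:ℝ) * s ^ 2)))
          * Real.sqrt (1 + 2 * s) ^ D ≤ Real.exp (-x) := by
        calc Real.exp (-t * ((D:ℝ) + 2 * ((D:ℝ) * s) + 2 * ((D:ℝ) * s ^ 2)))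
              * Real.sqrt (1 + 2 * s) ^ D
            ≤ Real.exp (-t * ((D:ℝ) + 2 * ((D:ℝ) * s) + 2 * ((D:ℝ) * s ^ 2)))
              * Real.exp (s * (1 + s) / (1 + 2 * s)) ^ D :=
              mul_le_mul_of_nonneg_left hpow (Real.exp_pos _).le
          _ = Real.exp (-x) := by
              rw [← Real.exp_nat_mul, ← Real.exp_add, hxs, htdef]
              congr 1
              field_simp
              ring
      calc P {ω | (D:ℝ) + 2 * ((D:ℝ) * s) + 2 * ((D:ℝ) * s ^ 2) ≤ (∑ k, X k) ω}
          = ENNReal.ofReal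
              (P {ω | (D:ℝ) + 2 * ((D:ℝ) * s) + 2 * ((D:ℝ) * s ^ 2) ≤ (∑ k, X k) ω}).toReal :=
            (ENNReal.ofReal_toReal (measure_ne_top P _)).symm
        _ ≤ ENNReal.ofReal (Real.exp (-x)) :=
            ENNReal.ofReal_le_ofReal (hch.trans hbound)
  refine ⟨key, ?_⟩
  intro y hy
  set r : ℝ := Real.sqrt D with hr
  have hrpos : 0 < r := Real.sqrt_pos.mpr hDpos
  set m : ℝ := min y r with hm
  have hmpos : 0 < m := lt_min hy hrpos
  have hmy : m ≤ y := min_le_left _ _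
  have hmr : m ≤ r := min_le_right _ _
  set x : ℝ := y * m / 8 with hxdef
  have hxpos : 0 < x := by positivity
  obtain ⟨hlow, hup⟩ := key x hxpos
  have hDr : (D:ℝ) = r ^ 2 := (Real.sq_sqrt hDpos.le).symm
  have h1 : Real.sqrt ((D:ℝ) * x) ≤ 3/8 * (y * r) := by
    have hsq : (D:ℝ) * x ≤ (3/8 * (y * r)) ^ 2 := by
      rw [hDr, hxdef]; nlinarith [hmy, hmpos.le, hy.le, hrpos.le]
    calc Real.sqrt ((D:ℝ) * x) ≤ Real.sqrt ((3/8 * (y * r)) ^ 2) := Real.sqrt_le_sqrt hsq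
      _ = 3/8 * (y * r) := Real.sqrt_sq (by positivity)
  have h2 : 2 * x ≤ y * r / 4 := by rw [hxdef]; nlinarith [hmr, hy.le]
  have hkey2 : 2 * Real.sqrt ((D:ℝ) * x) + 2 * x ≤ y * r := by linarith
  have hsub : {ω | y ≤ |∑ k, Z k ω ^ 2 - (D:ℝ)| / r}
      ⊆ {ω | ∑ k, Z k ω ^ 2 - (D:ℝ) ≤ -(2 * Real.sqrt ((D:ℝ) * x))}
        ∪ {ω | 2 * Real.sqrt ((D:ℝ) * x) + 2 * x ≤ ∑ k, Z k ω ^ 2 - (D:ℝ)} := by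
    intro ω hω
    simp only [Set.mem_setOf_eq] at hω
    have hyr : y * r ≤ |∑ k, Z k ω ^ 2 - (D:ℝ)| := (le_div_iff₀ hrpos).mp hω
    have hs0 : 0 ≤ Real.sqrt ((D:ℝ) * x) := Real.sqrt_nonneg _
    rcases abs_cases (∑ k, Z k ω ^ 2 - (D:ℝ)) with ⟨he, _⟩ | ⟨he, _⟩
    · right; simp only [Set.mem_setOf_eq]; rw [he] at hyr; linarith
    · left; simp only [Set.mem_setOf_eq]; rw [he] at hyr; linarith
  calc P {ω | y ≤ |∑ k, Z k ω ^ 2 - (D:ℝ)| / r}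
      ≤ P ({ω | ∑ k, Z k ω ^ 2 - (D:ℝ) ≤ -(2 * Real.sqrt ((D:ℝ) * x))}
          ∪ {ω | 2 * Real.sqrt ((D:ℝ) * x) + 2 * x ≤ ∑ k, Z k ω ^ 2 - (D:ℝ)}) :=
        measure_mono hsub
    _ ≤ P {ω | ∑ k, Z k ω ^ 2 - (D:ℝ) ≤ -(2 * Real.sqrt ((D:ℝ) * x))}
        + P {ω | 2 * Real.sqrt ((D:ℝ) * x) + 2 * x ≤ ∑ k, Z k ω ^ 2 - (D:ℝ)} :=
        measure_union_le _ _
    _ ≤ ENNReal.ofReal (Real.exp (-x)) + ENNReal.ofReal (Real.exp (-x)) :=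
        add_le_add hlow hup
    _ = ENNReal.ofReal (2 * Real.exp (-(1/8) * y * m)) := by
        rw [← ENNReal.ofReal_add (Real.exp_pos _).le (Real.exp_pos _).le, ← two_mul]
        congr 2
        rw [hxdef]; ring
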